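/- Let m ≥ 2 and let n ≥ 0 have base-m representation n = d_0 + d_1 m + ... + d_t m^t with 0 ≤ d_j ≤ m-1. Then the number b_m(n) of m-ary partitions of n (partitions of n all of whose parts are powers of m) satisfies b_m(n) ≡ ∏_{j=1}^{t} (d_j + 1) (mod m). -/

import Mathlib

open Finset

/-- An `m`-ary partition of `n`: a finitely supported function `c : ℕ →₀ ℕ`, where
`c j` is the multiplicity of the part `m^j`, with total sum `∑ c j · m^j = n`. -/
def IsMaryPartition (m : ℕ) (n : ℕ) (c : ℕ →₀ ℕ) : Prop :=
  c.sum (fun j v => v * m ^ j) = n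

namespace MaryAux

noncomputable def B (m n : ℕ) : ℕ := Nat.card {c : ℕ →₀ ℕ // IsMaryPartition m n c}

lemma term_le {m n : ℕ} {c : ℕ →₀ ℕ} (hc : IsMaryPartition m n c) (j : ℕ) :
    c j * m ^ j ≤ n := by
  rcases eq_or_ne (c j) 0 with h | h
  · simp [h]
  · calc c j * m ^ j ≤ c.sum (fun j v => v * m ^ j) :=
        Finset.single_le_sum (f := fun j => c j * m ^ j) (fun i _ => Nat.zero_le _)
          (Finsupp.mem_support_iff.2 h)
    _ = n := hc

lemma apply_le {m n : ℕ} (hm : 1 ≤ m) {c : ℕ →₀ ℕ} (hc : IsMaryPartition m n c) (j : ℕ) :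
    c j ≤ n := by
  have := term_le hc j
  have hp : 1 ≤ m ^ j := Nat.one_le_pow _ _ hm
  nlinarith

lemma eq_zero_of_gt {m n : ℕ} (hm : 2 ≤ m) {c : ℕ →₀ ℕ} (hc : IsMaryPartition m n c)
    {j : ℕ} (hj : n < j) : c j = 0 := by
  by_contra h
  have h1 : 1 ≤ c j := Nat.one_le_iff_ne_zero.2 h
  have h2 : m ^ j ≤ n := le_trans (by nlinarith [Nat.one_le_pow j m (by omega)]) (term_le hc j)
  have h3 : j < 2 ^ j := Nat.lt_two_pow_self
  have h4 : 2 ^ j ≤ m ^ j := Nat.pow_le_pow_left hm j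
  omega

lemma finite_subtype (m n : ℕ) (hm : 2 ≤ m) :
    Finite {c : ℕ →₀ ℕ // IsMaryPartition m n c} := by
  have hinj : Function.Injective (fun c : {c : ℕ →₀ ℕ // IsMaryPartition m n c} =>
      (fun j : Fin (n + 1) => (⟨c.1 j, Nat.lt_succ_of_le (apply_le (by omega) c.2 j)⟩ :
        Fin (n + 1)))) := by
    intro c₁ c₂ h
    ext j
    rcases le_or_gt j n with hj | hj
    · have := congrFun h ⟨j, by omega⟩
      simpa using this
    · rw [eq_zero_of_gt hm c₁.2 hj, eq_zero_of_gt hm c₂.2 hj]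
  exact Finite.of_injective _ hinj

/-! ### cons and tail -/

def succEmb : ℕ ↪ ℕ := ⟨fun j => j + 1, add_left_injective 1⟩

noncomputable def tailF (c : ℕ →₀ ℕ) : ℕ →₀ ℕ :=
  Finsupp.comapDomain (fun j => j + 1) c ((add_left_injective 1).injOn)

noncomputable def consF (a : ℕ) (c : ℕ →₀ ℕ) : ℕ →₀ ℕ :=
  Finsupp.single 0 a + Finsupp.embDomain succEmb c

@[simp] lemma tailF_apply (c : ℕ →₀ ℕ) (j : ℕ) : tailF c j = c (j + 1) := rfl

@[simp] lemma consF_apply_zero (a : ℕ) (c : ℕ →₀ ℕ) : consF a c 0 = a := by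
  have h0 : (0 : ℕ) ∉ Set.range ⇑succEmb := by
    rintro ⟨j, hj⟩
    simp only [succEmb, Function.Embedding.coeFn_mk] at hj
    omega
  simp [consF, Finsupp.embDomain_notin_range _ _ _ h0]

@[simp] lemma consF_apply_succ (a : ℕ) (c : ℕ →₀ ℕ) (j : ℕ) : consF a c (j + 1) = c j := by
  have h : consF a c (j + 1) =
      Finsupp.single 0 a (j + 1) + Finsupp.embDomain succEmb c (succEmb j) := rfl
  rw [h, Finsupp.embDomain_apply_self, Finsupp.single_apply, if_neg (by omega), zero_add]

lemma tailF_consF (a : ℕ) (c : ℕ →₀ ℕ) : tailF (consF a c) = c := by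
  ext j; simp

lemma consF_tailF (c : ℕ →₀ ℕ) : consF (c 0) (tailF c) = c := by
  ext j
  cases j with
  | zero => simp
  | succ j => simp

lemma sum_consF (m a : ℕ) (c : ℕ →₀ ℕ) :
    (consF a c).sum (fun j v => v * m ^ j) = a + m * c.sum (fun j v => v * m ^ j) := by
  unfold consF
  have hadd := Finsupp.sum_add_index' (f := Finsupp.single 0 a)
    (g := Finsupp.embDomain succEmb c) (h := fun j v => v * m ^ j)
    (fun _ => zero_mul _) (fun _ _ _ => add_mul _ _ _)
  have hsingle : (Finsupp.single 0 a).sum (fun j v => v * m ^ j) = a * m ^ 0 :=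
    Finsupp.sum_single_index (zero_mul _)
  rw [hadd, hsingle, Finsupp.sum_embDomain]
  simp only [succEmb, Function.Embedding.coeFn_mk, pow_zero, mul_one]
  congr 1
  rw [Finsupp.sum, Finsupp.sum, Finset.mul_sum]
  exact Finset.sum_congr rfl (fun j _ => by ring)

lemma sigma_ext' {k : ℕ} {P : ℕ → (ℕ →₀ ℕ) → Prop}
    {x y : Σ q : Fin k, {c : ℕ →₀ ℕ // P q.1 c}}
    (h1 : (x.1 : ℕ) = (y.1 : ℕ)) (h2 : x.2.1 = y.2.1) : x = y := by
  obtain ⟨⟨q, hq⟩, c, hc⟩ := x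
  obtain ⟨⟨q', hq'⟩, c', hc'⟩ := y
  dsimp at h1 h2
  subst h1
  have hcc : c = c' := h2
  subst hcc
  rfl

/-! ### recurrence -/

lemma B_rec (m n : ℕ) (hm : 2 ≤ m) :
    B m n = ∑ q ∈ range (n / m + 1), B m q := by
  have key : ∀ {k : ℕ} {c : ℕ →₀ ℕ}, IsMaryPartition m k c →
      k = c 0 + m * (tailF c).sum (fun j v => v * m ^ j) := by
    intro k c hc
    rw [← hc, ← sum_consF m (c 0) (tailF c), consF_tailF]
  have e : {c : ℕ →₀ ℕ // IsMaryPartition m n c} ≃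
      Σ q : Fin (n / m + 1), {c : ℕ →₀ ℕ // IsMaryPartition m (q : ℕ) c} := by
    refine
      { toFun := fun c =>
          ⟨⟨(tailF c.1).sum (fun j v => v * m ^ j), ?_⟩, ⟨tailF c.1, rfl⟩⟩
        invFun := fun x =>
          ⟨consF (n - m * (x.1 : ℕ)) x.2.1, ?_⟩
        left_inv := ?_
        right_inv := ?_ }
    · have := key c.2
      have hle : m * (tailF c.1).sum (fun j v => v * m ^ j) ≤ n := by omega
      have : (tailF c.1).sum (fun j v => v * m ^ j) ≤ n / m :=
        (Nat.le_div_iff_mul_le (by omega)).2 (by rw [mul_comm]; omega)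
      omega
    · obtain ⟨⟨q, hq⟩, ⟨c, hc⟩⟩ := x
      have hqm : m * q ≤ n := by
        have : q ≤ n / m := by omega
        have h2 := Nat.div_mul_le_self n m
        calc m * q ≤ m * (n / m) := by exact Nat.mul_le_mul_left m this
          _ ≤ n := by rw [mul_comm]; exact h2
      show IsMaryPartition m n _
      unfold IsMaryPartition
      rw [sum_consF, hc]
      show n - m * q + m * q = n
      omega
    · rintro ⟨c, hc⟩
      apply Subtype.ext
      have := key hc
      have : n - m * ((tailF c).sum fun j v => v * m ^ j) = c 0 := by omega
      simp only [this]
      exact consF_tailF c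
    · rintro ⟨⟨q, hq⟩, ⟨c, hc⟩⟩
      have h1 : tailF (consF (n - m * q) c) = c := tailF_consF _ _
      have h2 : (tailF (consF (n - m * q) c)).sum (fun j v => v * m ^ j) = q := by
        rw [h1]; exact hc
      exact sigma_ext' (by simpa using h2) (by simpa using h1)
  haveI hfin : ∀ k : ℕ, Finite {c : ℕ →₀ ℕ // IsMaryPartition m k c} :=
    fun k => finite_subtype m k hm
  letI : ∀ q : Fin (n / m + 1), Fintype {c : ℕ →₀ ℕ // IsMaryPartition m (q : ℕ) c} :=
    fun q => Fintype.ofFinite _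
  letI : Fintype (Σ q : Fin (n / m + 1), {c : ℕ →₀ ℕ // IsMaryPartition m (q : ℕ) c}) :=
    Sigma.instFintype
  rw [B, Nat.card_congr e, Nat.card_eq_fintype_card, Fintype.card_sigma]
  rw [← Fin.sum_univ_eq_sum_range (fun q => B m q)]
  refine Finset.sum_congr rfl fun q _ => ?_
  rw [B, Nat.card_eq_fintype_card]

lemma mary_zero {m : ℕ} (hm : 1 ≤ m) {x : ℕ →₀ ℕ} (hx : IsMaryPartition m 0 x) : x = 0 := by
  ext j
  have h := term_le hx j
  have hp : 0 < m ^ j := pow_pos (by omega) j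
  have h0 : x j * m ^ j = 0 := by omega
  rw [Nat.mul_eq_zero] at h0
  simp only [Finsupp.coe_zero, Pi.zero_apply]
  omega

lemma B_zero (m : ℕ) (hm : 2 ≤ m) : B m 0 = 1 := by
  rw [B, Nat.card_eq_one_iff_unique]
  refine ⟨⟨fun a b => ?_⟩, ⟨⟨0, by simp [IsMaryPartition]⟩⟩⟩
  apply Subtype.ext
  rw [mary_zero (by omega) a.2, mary_zero (by omega) b.2]

/-! ### the sum function S -/

noncomputable def S (m N : ℕ) : ℕ := ∑ q ∈ range (N + 1), B m q

lemma B_eq_S (m n : ℕ) (hm : 2 ≤ m) : B m n = S m (n / m) := B_rec m n hm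

lemma S_zero (m : ℕ) (hm : 2 ≤ m) : S m 0 = 1 := by
  rw [S, Finset.sum_range_one]
  exact B_zero m hm

lemma key_sum (m : ℕ) (hm : 2 ≤ m) (f : ℕ → ℕ) (N : ℕ) :
    (∑ q ∈ range (N + 1), f (q / m)) ≡ (N % m + 1) * f (N / m) [MOD m] := by
  induction N with
  | zero =>
    simpa using Nat.ModEq.refl (f 0)
  | succ N ih =>
    rw [Finset.sum_range_succ]
    have hdm := Nat.div_add_mod N m
    have hmod : N % m < m := Nat.mod_lt _ (by omega)
    rcases eq_or_ne (N % m + 1) m with h | h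
    · -- rollover
      have hN1 : N + 1 = m * (N / m + 1) := by
        have hx : m * (N / m + 1) = m * (N / m) + m := by ring
        omega
      have hdiv : (N + 1) / m = N / m + 1 := by
        rw [hN1, Nat.mul_div_cancel_left _ (by omega : 0 < m)]
      have hmod1 : (N + 1) % m = 0 := by
        rw [hN1, Nat.mul_mod_right]
      have h0 : (N % m + 1) * f (N / m) ≡ 0 [MOD m] := by
        rw [h]
        exact (Nat.modEq_zero_iff_dvd).2 ⟨f (N / m), rfl⟩
      calc (∑ q ∈ range (N + 1), f (q / m)) + f ((N + 1) / m)
          ≡ (N % m + 1) * f (N / m) + f ((N + 1) / m) [MOD m] := ih.add_right _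
        _ ≡ 0 + f ((N + 1) / m) [MOD m] := h0.add_right _
        _ = ((N + 1) % m + 1) * f ((N + 1) / m) := by rw [hmod1]; ring
    · -- no rollover
      have hlt : N % m + 1 < m := by omega
      have hN1 : N + 1 = m * (N / m) + (N % m + 1) := by omega
      have hdiv : (N + 1) / m = N / m := by
        rw [hN1, Nat.mul_add_div (by omega : 0 < m), Nat.div_eq_of_lt hlt, add_zero]
      have hmod1 : (N + 1) % m = N % m + 1 := by
        rw [hN1, Nat.mul_add_mod, Nat.mod_eq_of_lt hlt]
      calc (∑ q ∈ range (N + 1), f (q / m)) + f ((N + 1) / m)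
          ≡ (N % m + 1) * f (N / m) + f ((N + 1) / m) [MOD m] := ih.add_right _
        _ = ((N + 1) % m + 1) * f ((N + 1) / m) := by rw [hmod1, hdiv]; ring

lemma S_mod (m : ℕ) (hm : 2 ≤ m) (N : ℕ) :
    S m N ≡ (N % m + 1) * S m (N / m) [MOD m] := by
  have : S m N = ∑ q ∈ range (N + 1), S m (q / m) := by
    rw [S]
    exact Finset.sum_congr rfl fun q _ => B_eq_S m q hm
  rw [this]
  exact key_sum m hm (S m) N

lemma S_digits (m : ℕ) (hm : 2 ≤ m) :
    ∀ (t : ℕ) (e : ℕ → ℕ), (∀ j, j ≤ t → e j ≤ m - 1) →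
      S m (∑ j ∈ range (t + 1), e j * m ^ j) ≡ ∏ j ∈ range (t + 1), (e j + 1) [MOD m] := by
  intro t
  induction t with
  | zero =>
    intro e he
    have h0 : e 0 < m := by have := he 0 le_rfl; omega
    rw [show (0 : ℕ) + 1 = 1 from rfl, Finset.sum_range_one, Finset.prod_range_one,
      pow_zero, mul_one]
    have := S_mod m hm (e 0)
    rw [Nat.mod_eq_of_lt h0, Nat.div_eq_of_lt h0, S_zero m hm, mul_one] at this
    exact this
  | succ t ih =>
    intro e he
    set Q : ℕ := ∑ j ∈ range (t + 1), e (j + 1) * m ^ j with hQ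
    have hsplit : ∑ j ∈ range (t + 2), e j * m ^ j = e 0 + m * Q := by
      rw [Finset.sum_range_succ' (fun j => e j * m ^ j) (t + 1)]
      rw [hQ, Finset.mul_sum]
      simp only [pow_zero, mul_one]
      rw [add_comm]
      congr 1
      exact Finset.sum_congr rfl fun j _ => by ring
    have h0 : e 0 < m := by have := he 0 (by omega); omega
    have hmod : (e 0 + m * Q) % m = e 0 := by
      rw [Nat.add_mul_mod_self_left, Nat.mod_eq_of_lt h0]
    have hdiv : (e 0 + m * Q) / m = Q := by
      rw [Nat.add_mul_div_left _ _ (by omega : 0 < m), Nat.div_eq_of_lt h0, zero_add]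
    have hih := ih (fun j => e (j + 1)) (fun j hj => he (j + 1) (by omega))
    rw [hsplit]
    have h1 := S_mod m hm (e 0 + m * Q)
    rw [hmod, hdiv] at h1
    have h2 : (e 0 + 1) * S m Q ≡ (e 0 + 1) * ∏ j ∈ range (t + 1), (e (j + 1) + 1) [MOD m] :=
      hih.mul_left _
    have h3 : (e 0 + 1) * ∏ j ∈ range (t + 1), (e (j + 1) + 1)
        = ∏ j ∈ range (t + 2), (e j + 1) := by
      rw [Finset.prod_range_succ' (fun j => e j + 1) (t + 1), mul_comm]
    calc S m (e 0 + m * Q) ≡ (e 0 + 1) * S m Q [MOD m] := h1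
      _ ≡ (e 0 + 1) * ∏ j ∈ range (t + 1), (e (j + 1) + 1) [MOD m] := h2
      _ = ∏ j ∈ range (t + 2), (e j + 1) := h3

lemma prod_Icc_one (t : ℕ) (f : ℕ → ℕ) :
    ∏ j ∈ Icc 1 t, f j = ∏ j ∈ range t, f (j + 1) := by
  induction t with
  | zero => simp
  | succ t ih =>
    rw [Finset.prod_range_succ, ← ih, ← Finset.prod_Icc_succ_top (by omega : 1 ≤ t + 1)]

end MaryAux

theorem mary_count_mod (m : ℕ) (hm : 2 ≤ m)
    (n t : ℕ) (d : ℕ → ℕ) (hd : ∀ j, j ≤ t → d j ≤ m - 1)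
    (hn : n = ∑ j ∈ range (t + 1), d j * m ^ j) :
    Nat.card {c : ℕ →₀ ℕ // IsMaryPartition m n c}
      ≡ ∏ j ∈ Icc 1 t, (d j + 1) [MOD m] := by
  have hB : Nat.card {c : ℕ →₀ ℕ // IsMaryPartition m n c} = MaryAux.B m n := rfl
  rw [hB, MaryAux.B_eq_S m n hm, MaryAux.prod_Icc_one]
  cases t with
  | zero =>
    have h0 : n < m := by
      have := hd 0 le_rfl
      rw [show (0 : ℕ) + 1 = 1 from rfl, Finset.sum_range_one, pow_zero, mul_one] at hn
      omega
    rw [Nat.div_eq_of_lt h0, MaryAux.S_zero m hm]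
    simpa using Nat.ModEq.refl 1
  | succ t =>
    set Q : ℕ := ∑ j ∈ range (t + 1), d (j + 1) * m ^ j with hQ
    have hsplit : n = d 0 + m * Q := by
      rw [hn, Finset.sum_range_succ' (fun j => d j * m ^ j) (t + 1), hQ, Finset.mul_sum]
      simp only [pow_zero, mul_one]
      rw [add_comm]
      congr 1
      exact Finset.sum_congr rfl fun j _ => by ring
    have h0 : d 0 < m := by have := hd 0 (by omega); omega
    have hdiv : n / m = Q := by
      rw [hsplit, Nat.add_mul_div_left _ _ (by omega : 0 < m), Nat.div_eq_of_lt h0, zero_add]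
    rw [hdiv, hQ]
    exact MaryAux.S_digits m hm t (fun j => d (j + 1)) (fun j hj => hd (j + 1) (by omega))
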